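/- Coercivity and boundedness of the evolving Steklov–Poincaré operators: define S_i : Z → Z* by ⟨S_iη, μ⟩ = a_i(F_iη, F_iμ). Then S_i is bounded, |⟨S_iη,μ⟩| ≤ C‖η‖_Z‖μ‖_Z, and coercive, ⟨S_iη, η⟩ ≥ c‖η‖²_Z for all η ∈ Z; consequently S_i and S = S₁ + S₂ are isomorphisms Z → Z*. -/

import Mathlib

private lemma lax_milgram_unique {Z : Type*} [NormedAddCommGroup Z] [InnerProductSpace ℝ Z]
    [CompleteSpace Z] (B : Z →L[ℝ] Z →L[ℝ] ℝ) (hB : IsCoercive B) (χ : Z →L[ℝ] ℝ) :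
    ∃! η : Z, ∀ μ : Z, B η μ = χ μ := by
  set z : Z := (InnerProductSpace.toDual ℝ Z).symm χ with hz
  have hzχ : ∀ μ : Z, (inner ℝ z μ : ℝ) = χ μ := by intro μ; simp [hz]
  refine ⟨hB.continuousLinearEquivOfBilin.symm z, ?_, ?_⟩
  · intro μ
    rw [← hzχ μ, ← hB.continuousLinearEquivOfBilin_apply
      (hB.continuousLinearEquivOfBilin.symm z) μ]
    congr 1
    exact hB.continuousLinearEquivOfBilin.apply_symm_apply z
  · intro η hη
    have key : ∀ w : Z, (inner ℝ z w : ℝ) = B η w := fun w => by rw [hzχ, hη]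
    have hzeq : z = hB.continuousLinearEquivOfBilin η :=
      hB.unique_continuousLinearEquivOfBilin key
    rw [hzeq]
    exact (hB.continuousLinearEquivOfBilin.symm_apply_apply η).symm

set_option maxHeartbeats 1000000 in
/-- The evolving Steklov–Poincaré operators
`⟨S_iη, μ⟩ = a_i(F_iη, F_iμ)` are bounded and coercive on the interface space `Z`, and
consequently `S₁`, `S₂` and `S = S₁ + S₂` are isomorphisms `Z → Z*` (expressed as unique
solvability of `⟨S η, ·⟩ = χ` for every `χ ∈ Z*`).  The hypotheses encode: boundedness of
`a_i : W_i × W̃_i → ℝ`, coercivity `a_i(u,u) ≥ c' N_i(u)²` in the `L²_{H¹(Ω_i)}`-seminorm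
`N_i`, the trace identity `T_i F_i η = η`, and the a priori bound
`‖F_iη‖ ≤ C_F N_i(F_iη)`. -/
theorem stmt_15 {Z W1 W2 W1' W2' : Type*}
    [NormedAddCommGroup Z] [InnerProductSpace ℝ Z] [CompleteSpace Z]
    [NormedAddCommGroup W1] [NormedSpace ℝ W1]
    [NormedAddCommGroup W2] [NormedSpace ℝ W2]
    [NormedAddCommGroup W1'] [NormedSpace ℝ W1']
    [NormedAddCommGroup W2'] [NormedSpace ℝ W2']
    (a1 : W1 →ₗ[ℝ] W1' →ₗ[ℝ] ℝ) (a2 : W2 →ₗ[ℝ] W2' →ₗ[ℝ] ℝ)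
    (ι1 : W1 →L[ℝ] W1') (ι2 : W2 →L[ℝ] W2')
    (F1 : Z →L[ℝ] W1) (F2 : Z →L[ℝ] W2)
    (T1 : W1 →L[ℝ] Z) (T2 : W2 →L[ℝ] Z)
    (hT1 : ∀ η : Z, T1 (F1 η) = η) (hT2 : ∀ η : Z, T2 (F2 η) = η)
    (N1 : W1 → ℝ) (N2 : W2 → ℝ)
    (hN1 : ∀ u : W1, 0 ≤ N1 u) (hN2 : ∀ u : W2, 0 ≤ N2 u)
    {Ca c' CF : ℝ} (hCa : 0 < Ca) (hc' : 0 < c') (hCF : 0 < CF)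
    (hbd1 : ∀ (u : W1) (v : W1'), |a1 u v| ≤ Ca * ‖u‖ * ‖v‖)
    (hbd2 : ∀ (u : W2) (v : W2'), |a2 u v| ≤ Ca * ‖u‖ * ‖v‖)
    (hcoer1 : ∀ u : W1, c' * (N1 u) ^ 2 ≤ a1 u (ι1 u))
    (hcoer2 : ∀ u : W2, c' * (N2 u) ^ 2 ≤ a2 u (ι2 u))
    (hF1 : ∀ η : Z, ‖F1 η‖ ≤ CF * N1 (F1 η))
    (hF2 : ∀ η : Z, ‖F2 η‖ ≤ CF * N2 (F2 η)) :
    (∃ C : ℝ, 0 < C ∧ ∀ η μ : Z,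
        |a1 (F1 η) (ι1 (F1 μ))| ≤ C * ‖η‖ * ‖μ‖ ∧
        |a2 (F2 η) (ι2 (F2 μ))| ≤ C * ‖η‖ * ‖μ‖) ∧
    (∃ c : ℝ, 0 < c ∧ ∀ η : Z,
        c * ‖η‖ ^ 2 ≤ a1 (F1 η) (ι1 (F1 η)) ∧
        c * ‖η‖ ^ 2 ≤ a2 (F2 η) (ι2 (F2 η))) ∧
    (∀ χ : Z →L[ℝ] ℝ,
        (∃! η : Z, ∀ μ : Z, a1 (F1 η) (ι1 (F1 μ)) = χ μ) ∧
        (∃! η : Z, ∀ μ : Z, a2 (F2 η) (ι2 (F2 μ)) = χ μ) ∧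
        (∃! η : Z, ∀ μ : Z, a1 (F1 η) (ι1 (F1 μ)) + a2 (F2 η) (ι2 (F2 μ)) = χ μ)) := by
  set K : ℝ := ‖F1‖ + ‖F2‖ + 1 with hK
  have hKpos : 0 < K := by positivity
  set I : ℝ := ‖ι1‖ + ‖ι2‖ + 1 with hI
  have hIpos : 0 < I := by positivity
  set C : ℝ := Ca * I * K ^ 2 with hC
  have hCpos : 0 < C := by positivity
  have hF1K : ∀ η : Z, ‖F1 η‖ ≤ K * ‖η‖ := by
    intro η
    refine (F1.le_opNorm η).trans ?_
    have : ‖F1‖ ≤ K := by rw [hK]; nlinarith [norm_nonneg (F2 : Z →L[ℝ] W2)]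
    exact mul_le_mul_of_nonneg_right this (norm_nonneg η)
  have hF2K : ∀ η : Z, ‖F2 η‖ ≤ K * ‖η‖ := by
    intro η
    refine (F2.le_opNorm η).trans ?_
    have : ‖F2‖ ≤ K := by rw [hK]; nlinarith [norm_nonneg (F1 : Z →L[ℝ] W1)]
    exact mul_le_mul_of_nonneg_right this (norm_nonneg η)
  have hb1 : ∀ η μ : Z, |a1 (F1 η) (ι1 (F1 μ))| ≤ C * ‖η‖ * ‖μ‖ := by
    intro η μ
    have h2 : ‖ι1 (F1 μ)‖ ≤ I * (K * ‖μ‖) := by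
      refine (ι1.le_opNorm (F1 μ)).trans ?_
      have hι : ‖ι1‖ ≤ I := by rw [hI]; nlinarith [norm_nonneg (ι2 : W2 →L[ℝ] W2')]
      exact mul_le_mul hι (hF1K μ) (norm_nonneg _) hIpos.le
    calc |a1 (F1 η) (ι1 (F1 μ))| ≤ Ca * ‖F1 η‖ * ‖ι1 (F1 μ)‖ := hbd1 _ _
      _ ≤ Ca * (K * ‖η‖) * (I * (K * ‖μ‖)) := by
          gcongr
          all_goals first | exact hF1K η | exact h2
      _ = C * ‖η‖ * ‖μ‖ := by rw [hC]; ring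
  have hb2 : ∀ η μ : Z, |a2 (F2 η) (ι2 (F2 μ))| ≤ C * ‖η‖ * ‖μ‖ := by
    intro η μ
    have h2 : ‖ι2 (F2 μ)‖ ≤ I * (K * ‖μ‖) := by
      refine (ι2.le_opNorm (F2 μ)).trans ?_
      have hι : ‖ι2‖ ≤ I := by rw [hI]; nlinarith [norm_nonneg (ι1 : W1 →L[ℝ] W1')]
      exact mul_le_mul hι (hF2K μ) (norm_nonneg _) hIpos.le
    calc |a2 (F2 η) (ι2 (F2 μ))| ≤ Ca * ‖F2 η‖ * ‖ι2 (F2 μ)‖ := hbd2 _ _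
      _ ≤ Ca * (K * ‖η‖) * (I * (K * ‖μ‖)) := by
          gcongr
          all_goals first | exact hF2K η | exact h2
      _ = C * ‖η‖ * ‖μ‖ := by rw [hC]; ring
  -- coercivity
  set T : ℝ := (‖T1‖ + ‖T2‖ + 1) * CF with hT
  have hTpos : 0 < T := by positivity
  set c : ℝ := c' / T ^ 2 with hcdef
  have hcpos : 0 < c := by positivity
  have hcoer1' : ∀ η : Z, c * ‖η‖ ^ 2 ≤ a1 (F1 η) (ι1 (F1 η)) := by
    intro η
    have hη : ‖η‖ ≤ T * N1 (F1 η) := by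
      have h1 : ‖η‖ = ‖T1 (F1 η)‖ := by rw [hT1]
      have h2 : ‖T1 (F1 η)‖ ≤ ‖T1‖ * ‖F1 η‖ := T1.le_opNorm _
      have h3 := hF1 η
      rw [hT]
      nlinarith [norm_nonneg (T1 : W1 →L[ℝ] Z), norm_nonneg (T2 : W2 →L[ℝ] Z),
        norm_nonneg (F1 η), hN1 (F1 η), hCF.le]
    have h4 : ‖η‖ ^ 2 ≤ T ^ 2 * (N1 (F1 η)) ^ 2 := by nlinarith [norm_nonneg η]
    have h5 := hcoer1 (F1 η)
    have h6 : c * ‖η‖ ^ 2 ≤ c' * (N1 (F1 η)) ^ 2 := by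
      rw [hcdef, div_mul_eq_mul_div, div_le_iff₀ (by positivity)]
      nlinarith
    linarith
  have hcoer2' : ∀ η : Z, c * ‖η‖ ^ 2 ≤ a2 (F2 η) (ι2 (F2 η)) := by
    intro η
    have hη : ‖η‖ ≤ T * N2 (F2 η) := by
      have h1 : ‖η‖ = ‖T2 (F2 η)‖ := by rw [hT2]
      have h2 : ‖T2 (F2 η)‖ ≤ ‖T2‖ * ‖F2 η‖ := T2.le_opNorm _
      have h3 := hF2 η
      rw [hT]
      nlinarith [norm_nonneg (T1 : W1 →L[ℝ] Z), norm_nonneg (T2 : W2 →L[ℝ] Z),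
        norm_nonneg (F2 η), hN2 (F2 η), hCF.le]
    have h4 : ‖η‖ ^ 2 ≤ T ^ 2 * (N2 (F2 η)) ^ 2 := by nlinarith [norm_nonneg η]
    have h5 := hcoer2 (F2 η)
    have h6 : c * ‖η‖ ^ 2 ≤ c' * (N2 (F2 η)) ^ 2 := by
      rw [hcdef, div_mul_eq_mul_div, div_le_iff₀ (by positivity)]
      nlinarith
    linarith
  refine ⟨⟨C, hCpos, fun η μ => ⟨hb1 η μ, hb2 η μ⟩⟩,
    ⟨c, hcpos, fun η => ⟨hcoer1' η, hcoer2' η⟩⟩, ?_⟩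
  -- isomorphisms via Lax–Milgram
  intro χ
  let b1 : Z →ₗ[ℝ] Z →ₗ[ℝ] ℝ :=
    LinearMap.mk₂ ℝ (fun η μ => a1 (F1 η) (ι1 (F1 μ)))
      (fun x y z => by simp) (fun r x y => by simp)
      (fun x y z => by simp) (fun r x y => by simp)
  let b2 : Z →ₗ[ℝ] Z →ₗ[ℝ] ℝ :=
    LinearMap.mk₂ ℝ (fun η μ => a2 (F2 η) (ι2 (F2 μ)))
      (fun x y z => by simp) (fun r x y => by simp)
      (fun x y z => by simp) (fun r x y => by simp)
  let B1 : Z →L[ℝ] Z →L[ℝ] ℝ := LinearMap.mkContinuous₂ b1 C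
    (fun η μ => by rw [Real.norm_eq_abs]; exact hb1 η μ)
  let B2 : Z →L[ℝ] Z →L[ℝ] ℝ := LinearMap.mkContinuous₂ b2 C
    (fun η μ => by rw [Real.norm_eq_abs]; exact hb2 η μ)
  have hB1app : ∀ η μ : Z, B1 η μ = a1 (F1 η) (ι1 (F1 μ)) := fun η μ => rfl
  have hB2app : ∀ η μ : Z, B2 η μ = a2 (F2 η) (ι2 (F2 μ)) := fun η μ => rfl
  have hB1c : IsCoercive B1 := ⟨c, hcpos, fun η => by
    rw [hB1app]; have := hcoer1' η; nlinarith [norm_nonneg η]⟩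
  have hB2c : IsCoercive B2 := ⟨c, hcpos, fun η => by
    rw [hB2app]; have := hcoer2' η; nlinarith [norm_nonneg η]⟩
  have hBsc : IsCoercive (B1 + B2) := ⟨c, hcpos, fun η => by
    simp only [ContinuousLinearMap.add_apply]
    have g1 : c * ‖η‖ * ‖η‖ ≤ B1 η η := by
      rw [hB1app]; have := hcoer1' η; nlinarith [norm_nonneg η]
    have g2 : (0:ℝ) ≤ B2 η η := by
      rw [hB2app]; have := hcoer2' η; nlinarith [norm_nonneg η]
    linarith⟩
  have e1 := lax_milgram_unique B1 hB1c χ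
  have e2 := lax_milgram_unique B2 hB2c χ
  have e3 := lax_milgram_unique (B1 + B2) hBsc χ
  refine ⟨?_, ?_, ?_⟩
  · simpa only [hB1app] using e1
  · simpa only [hB2app] using e2
  · simpa only [ContinuousLinearMap.add_apply, hB1app, hB2app] using e3
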